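/- Let α: Γ → Aut(G) be a faithful action of a group Γ on a finite directed multigraph G. Then the equivalence relation on nodes of G whose classes are the node-orbits of the action satisfies the local in-isomorphism property; consequently, there is a graph B and a surjective fibration φ: G → B whose fibres are the node-orbits of α. -/

import Mathlib

/-- A directed multigraph: node set `N`, arc set `A`, source and target maps. -/
structure Multigraph (N A : Type) where
  s : A → N
  t : A → N

/-- A homomorphism of directed multigraphs: maps on nodes and arcs commuting
with source and target. -/
structure GraphHom {N A N' A' : Type} (G : Multigraph N A) (B : Multigraph N' A') where
  nodeMap : N → N'
  arcMap : A → A'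
  map_s : ∀ a, B.s (arcMap a) = nodeMap (G.s a)
  map_t : ∀ a, B.t (arcMap a) = nodeMap (G.t a)

/-- A fibration: every arc of the base lifts uniquely at every node in the
fibre of its target. -/
def IsFibration {N A N' A' : Type} {G : Multigraph N A} {B : Multigraph N' A'}
    (φ : GraphHom G B) : Prop :=
  ∀ (a : A') (x : N), φ.nodeMap x = B.t a →
    ∃! a' : A, φ.arcMap a' = a ∧ G.t a' = x

/-- Orbits of a (faithful) group action on a finite graph satisfy the local
in-isomorphism property; consequently there is a surjective fibration whose
fibres are the node-orbits. -/
theorem orbits_local_in_isomorphism_and_fibration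
    {N A : Type} [Fintype N] [Fintype A] (G : Multigraph N A)
    {Γ : Type} [Group Γ]
    (αN : Γ → N ≃ N) (αA : Γ → A ≃ A)
    (hs : ∀ g a, G.s (αA g a) = αN g (G.s a))
    (ht : ∀ g a, G.t (αA g a) = αN g (G.t a))
    (honeN : αN 1 = Equiv.refl N)
    (honeA : αA 1 = Equiv.refl A)
    (hmulN : ∀ g h : Γ, αN (g * h) = (αN h).trans (αN g))
    (hmulA : ∀ g h : Γ, αA (g * h) = (αA h).trans (αA g))
    (hfaithful : ∀ g h : Γ, αN g = αN h → αA g = αA h → g = h) :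
    (∀ x y : N, (∃ g : Γ, αN g x = y) →
      ∃ e : {a : A // G.t a = x} ≃ {a : A // G.t a = y},
        ∀ a : {a : A // G.t a = x},
          ∃ g : Γ, αN g (G.s a.val) = G.s (e a).val) ∧
    ∃ (N' A' : Type) (B : Multigraph N' A') (φ : GraphHom G B),
      IsFibration φ ∧
      Function.Surjective φ.nodeMap ∧
      Function.Surjective φ.arcMap ∧
      ∀ x y : N, φ.nodeMap x = φ.nodeMap y ↔ ∃ g : Γ, αN g x = y := by
  classical
  -- inverse lemmas
  have hNinv : ∀ (g : Γ) (x : N), αN g⁻¹ (αN g x) = x := by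
    intro g x
    have h1 : αN (g⁻¹ * g) x = αN g⁻¹ (αN g x) := by rw [hmulN]; rfl
    rw [inv_mul_cancel, honeN] at h1
    exact h1.symm
  have hNinv' : ∀ (g : Γ) (x : N), αN g (αN g⁻¹ x) = x := by
    intro g x
    have := hNinv g⁻¹ x
    rwa [inv_inv] at this
  have hAinv : ∀ (g : Γ) (a : A), αA g⁻¹ (αA g a) = a := by
    intro g a
    have h1 : αA (g⁻¹ * g) a = αA g⁻¹ (αA g a) := by rw [hmulA]; rfl
    rw [inv_mul_cancel, honeA] at h1
    exact h1.symm
  have hAinv' : ∀ (g : Γ) (a : A), αA g (αA g⁻¹ a) = a := by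
    intro g a
    have := hAinv g⁻¹ a
    rwa [inv_inv] at this
  constructor
  · -- local in-isomorphism
    rintro x y ⟨g, hg⟩
    refine ⟨⟨fun a => ⟨αA g a.val, by rw [ht, a.prop, hg]⟩,
             fun b => ⟨αA g⁻¹ b.val, by rw [ht, b.prop, ← hg, hNinv]⟩,
             fun a => by ext; exact hAinv g a.val,
             fun b => by ext; exact hAinv' g b.val⟩,
           fun a => ⟨g, (hs g a.val).symm⟩⟩
  · -- the fibration
    set r : N → N → Prop := fun x y => ∃ g : Γ, αN g x = y with hr
    have hrefl : ∀ x, r x x := fun x => ⟨1, by rw [honeN]; rfl⟩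
    have hsymm : ∀ {x y}, r x y → r y x := by
      rintro x y ⟨g, hg⟩; exact ⟨g⁻¹, by rw [← hg, hNinv]⟩
    have htrans : ∀ {x y z}, r x y → r y z → r x z := by
      rintro x y z ⟨g, hg⟩ ⟨g', hg'⟩
      exact ⟨g' * g, by rw [hmulN]; simp only [Equiv.trans_apply]; rw [hg, hg']⟩
    let sN : Setoid N := ⟨r, ⟨hrefl, fun h => hsymm h, fun h h' => htrans h h'⟩⟩
    let Q := Quotient sN
    let mk : N → Q := Quotient.mk sN
    have hmk_eq : ∀ x y : N, mk x = mk y ↔ r x y := fun x y =>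
      ⟨fun h => Quotient.exact h, fun h => Quotient.sound h⟩
    -- representative and transporting element
    let rep : N → N := fun x => (mk x).out
    have hrep : ∀ x, r x (rep x) := by
      intro x
      have : r (rep x) x := Quotient.mk_out (s := sN) x
      exact hsymm this
    let gx : N → Γ := fun x => Classical.choose (hrep x)
    have hgx : ∀ x, αN (gx x) x = rep x := fun x => Classical.choose_spec (hrep x)
    have hrep_eq : ∀ x y : N, r x y → rep x = rep y := by
      intro x y h
      have : mk x = mk y := Quotient.sound h
      simp only [rep, this]
    -- base arcs
    let A' := {a : A // G.t a = rep (G.t a)}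
    let B : Multigraph Q A' := ⟨fun a => mk (G.s a.val), fun a => mk (G.t a.val)⟩
    have harc : ∀ a : A, G.t (αA (gx (G.t a)) a) = rep (G.t (αA (gx (G.t a)) a)) := by
      intro a
      rw [ht, hgx]
      exact hrep_eq _ _ (hrep (G.t a))
    let φ : GraphHom G B :=
      { nodeMap := mk
        arcMap := fun a => ⟨αA (gx (G.t a)) a, harc a⟩
        map_s := by
          intro a
          show mk (G.s (αA (gx (G.t a)) a)) = mk (G.s a)
          rw [hs]
          exact Quotient.sound (hsymm ⟨gx (G.t a), rfl⟩)
        map_t := by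
          intro a
          show mk (G.t (αA (gx (G.t a)) a)) = mk (G.t a)
          rw [ht]
          exact Quotient.sound (hsymm ⟨gx (G.t a), rfl⟩) }
    have hfib : IsFibration φ := by
      intro b x hx
      have hx' : mk x = mk (G.t b.val) := hx
      have hrx : rep x = G.t b.val := by
        have h1 : rep x = rep (G.t b.val) := hrep_eq _ _ (Quotient.exact hx')
        rw [h1, ← b.prop]
      refine ⟨αA (gx x)⁻¹ b.val, ⟨?_, ?_⟩, ?_⟩
      · -- arcMap of the lift is b
        have htgt : G.t (αA (gx x)⁻¹ b.val) = x := by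
          rw [ht, ← hrx, ← hgx x, hNinv]
        apply Subtype.ext
        show αA (gx (G.t (αA (gx x)⁻¹ b.val))) (αA (gx x)⁻¹ b.val) = b.val
        rw [htgt, hAinv']
      · rw [ht, ← hrx, ← hgx x, hNinv]
      · rintro a' ⟨ha1, ha2⟩
        have : αA (gx x) a' = b.val := by
          have := congrArg Subtype.val ha1
          change αA (gx (G.t a')) a' = b.val at this
          simpa [ha2] using this
        rw [← this, hAinv]
    refine ⟨Q, A', B, φ, hfib, ?_, ?_, ?_⟩
    · exact fun q => Quotient.exists_rep q
    · intro b
      obtain ⟨a', ⟨ha1, _⟩, _⟩ := hfib b (G.t b.val) rfl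
      exact ⟨a', ha1⟩
    · intro x y
      exact ⟨fun h => Quotient.exact h, fun h => Quotient.sound h⟩
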